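/- Let u₀ : [0,δ] → ℝ be continuous, u₁ : [0,δ] → ℝ continuous and nonnegative, w : [0,δ] → ℝ continuous with w(0)=0, and σ ≥ 0, and suppose u₀(t) = u₀(0) − ∫₀ᵗ u₀(s)u₁(s) ds + σ w(t) for all t ∈ [0,δ]. Then for all t ∈ [0,δ], |u₀(t)| ≤ |u₀(0)| + 2σ sup_{s∈[0,δ]} |w(s)|. -/

import Mathlib

open intervalIntegral Set

private lemma key_bound (δ σ : ℝ) (hδ : 0 ≤ δ) (hσ : 0 ≤ σ)
    (u₀ u₁ w : ℝ → ℝ)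
    (hu₀ : ContinuousOn u₀ (Set.Icc 0 δ))
    (hu₁ : ContinuousOn u₁ (Set.Icc 0 δ))
    (hu₁pos : ∀ s ∈ Set.Icc (0:ℝ) δ, 0 ≤ u₁ s)
    (hw : ContinuousOn w (Set.Icc 0 δ))
    (heq : ∀ t ∈ Set.Icc (0:ℝ) δ,
      u₀ t = u₀ 0 - (∫ s in (0:ℝ)..t, u₀ s * u₁ s) + σ * w t)
    (M : ℝ) (hM : ∀ s ∈ Set.Icc (0:ℝ) δ, |w s| ≤ M) (hM0 : 0 ≤ M) :
    ∀ t ∈ Set.Icc (0:ℝ) δ, u₀ t ≤ |u₀ 0| + 2 * σ * M := by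
  intro t ht
  obtain ⟨ht0, htδ⟩ := ht
  by_cases hpos : u₀ t ≤ 0
  · have : 0 ≤ |u₀ 0| + 2 * σ * M := by positivity
    linarith
  push_neg at hpos
  have hsub : Set.Icc (0:ℝ) t ⊆ Set.Icc 0 δ := Set.Icc_subset_Icc le_rfl htδ
  have hcont_t : ContinuousOn u₀ (Set.Icc 0 t) := hu₀.mono hsub
  have hint : ∀ a b : ℝ, a ∈ Set.Icc (0:ℝ) δ → b ∈ Set.Icc (0:ℝ) δ →
      IntervalIntegrable (fun s => u₀ s * u₁ s) MeasureTheory.volume a b := by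
    intro a b ha hb
    apply ContinuousOn.intervalIntegrable
    exact (hu₀.mul hu₁).mono (Set.uIcc_subset_Icc ha hb)
  obtain ⟨Z, hZ⟩ : ∃ Z : Set ℝ, Z = {s ∈ Set.Icc (0:ℝ) t | u₀ s = 0} := ⟨_, rfl⟩
  by_cases hne : Z.Nonempty
  · -- last zero a
    have hZclosed : IsClosed Z := by
      rw [hZ]
      have := hcont_t.preimage_isClosed_of_isClosed isClosed_Icc (isClosed_singleton (x := (0:ℝ)))
      convert this using 1
      exact Set.ext fun _ => Iff.rfl
    have hZbdd : BddAbove Z := ⟨t, fun s hs => by rw [hZ] at hs; exact hs.1.2⟩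
    obtain ⟨a, ha⟩ : ∃ a : ℝ, a = sSup Z := ⟨_, rfl⟩
    have haZ := hZclosed.csSup_mem hne hZbdd
    rw [← ha, hZ] at haZ
    obtain ⟨⟨ha0, hat⟩, hua⟩ := haZ
    have hat' : a < t := lt_of_le_of_ne hat (by rintro rfl; exact hpos.ne' hua)
    -- u₀ ≥ 0 on [a,t]
    have hnn : ∀ s ∈ Set.Icc a t, 0 ≤ u₀ s := by
      rintro s ⟨has, hst⟩
      by_contra hneg
      push_neg at hneg
      have hcst : ContinuousOn u₀ (Set.Icc s t) :=
        hcont_t.mono (Set.Icc_subset_Icc (le_trans ha0 has) le_rfl)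
      have : (0:ℝ) ∈ u₀ '' Set.Icc s t := by
        apply intermediate_value_Icc hst hcst
        exact ⟨hneg.le, hpos.le⟩
      obtain ⟨z, hz, huz⟩ := this
      have hzZ : z ∈ Z := by rw [hZ]; exact ⟨⟨le_trans (le_trans ha0 has) hz.1, hz.2⟩, huz⟩
      have hsa : a < s := lt_of_le_of_ne has (by rintro rfl; exact hneg.ne hua)
      have : z ≤ a := ha ▸ le_csSup hZbdd hzZ
      linarith [hz.1]
    have hintnn : 0 ≤ ∫ s in a..t, u₀ s * u₁ s := by
      apply intervalIntegral.integral_nonneg hat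
      intro s hs
      exact mul_nonneg (hnn s hs)
        (hu₁pos s ⟨le_trans ha0 hs.1, le_trans hs.2 htδ⟩)
    have haδ : a ∈ Set.Icc (0:ℝ) δ := ⟨ha0, le_trans hat htδ⟩
    have htδ' : t ∈ Set.Icc (0:ℝ) δ := ⟨ht0, htδ⟩
    have hsplit : (∫ s in (0:ℝ)..t, u₀ s * u₁ s) - (∫ s in (0:ℝ)..a, u₀ s * u₁ s)
        = ∫ s in a..t, u₀ s * u₁ s :=
      intervalIntegral.integral_interval_sub_left (hint 0 t ⟨le_rfl, hδ⟩ htδ')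
        (hint 0 a ⟨le_rfl, hδ⟩ haδ)
    have e1 := heq t htδ'
    have e2 := heq a haδ
    have : u₀ t = u₀ a - (∫ s in a..t, u₀ s * u₁ s) + σ * (w t - w a) := by
      rw [← hsplit]; rw [e1, e2]; ring
    have hwa := hM a haδ
    have hwt := hM t htδ'
    have : u₀ t ≤ σ * (w t - w a) := by rw [this, hua]; linarith
    have : u₀ t ≤ σ * (2 * M) := by
      refine le_trans this (mul_le_mul_of_nonneg_left ?_ hσ)
      have := abs_le.1 hwa; have := abs_le.1 hwt; linarith
    have : 0 ≤ |u₀ 0| := abs_nonneg _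
    linarith
  · -- no zero on [0,t]: u₀ > 0 on [0,t]
    rw [Set.not_nonempty_iff_eq_empty] at hne
    have hnn : ∀ s ∈ Set.Icc (0:ℝ) t, 0 ≤ u₀ s := by
      rintro s ⟨hs0, hst⟩
      by_contra hneg
      push_neg at hneg
      have hcst : ContinuousOn u₀ (Set.Icc s t) :=
        hcont_t.mono (Set.Icc_subset_Icc hs0 le_rfl)
      have : (0:ℝ) ∈ u₀ '' Set.Icc s t := by
        apply intermediate_value_Icc hst hcst
        exact ⟨hneg.le, hpos.le⟩
      obtain ⟨z, hz, huz⟩ := this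
      have : z ∈ Z := by rw [hZ]; exact ⟨⟨le_trans hs0 hz.1, hz.2⟩, huz⟩
      simp [hne] at this
    have hintnn : 0 ≤ ∫ s in (0:ℝ)..t, u₀ s * u₁ s := by
      apply intervalIntegral.integral_nonneg ht0
      intro s hs
      exact mul_nonneg (hnn s hs) (hu₁pos s ⟨hs.1, le_trans hs.2 htδ⟩)
    have e1 := heq t ⟨ht0, htδ⟩
    have hwt := abs_le.1 (hM t ⟨ht0, htδ⟩)
    have h1 : u₀ 0 ≤ |u₀ 0| := le_abs_self _
    have : σ * w t ≤ σ * M := mul_le_mul_of_nonneg_left hwt.2 hσ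
    nlinarith

theorem stmt_3 (δ σ : ℝ) (hδ : 0 ≤ δ) (hσ : 0 ≤ σ)
    (u₀ u₁ w : ℝ → ℝ)
    (hu₀ : ContinuousOn u₀ (Set.Icc 0 δ))
    (hu₁ : ContinuousOn u₁ (Set.Icc 0 δ))
    (hu₁pos : ∀ s ∈ Set.Icc (0:ℝ) δ, 0 ≤ u₁ s)
    (hw : ContinuousOn w (Set.Icc 0 δ)) (hw0 : w 0 = 0)
    (heq : ∀ t ∈ Set.Icc (0:ℝ) δ,
      u₀ t = u₀ 0 - (∫ s in (0:ℝ)..t, u₀ s * u₁ s) + σ * w t) :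
    ∀ t ∈ Set.Icc (0:ℝ) δ,
      |u₀ t| ≤ |u₀ 0| + 2 * σ * sSup ((fun s => |w s|) '' Set.Icc (0:ℝ) δ) := by
  set M := sSup ((fun s => |w s|) '' Set.Icc (0:ℝ) δ) with hMdef
  have hcompact : IsCompact ((fun s => |w s|) '' Set.Icc (0:ℝ) δ) :=
    (isCompact_Icc).image_of_continuousOn (hw.abs)
  have hbdd : BddAbove ((fun s => |w s|) '' Set.Icc (0:ℝ) δ) := hcompact.bddAbove
  have hM : ∀ s ∈ Set.Icc (0:ℝ) δ, |w s| ≤ M := fun s hs =>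
    le_csSup hbdd ⟨s, hs, rfl⟩
  have hM0 : 0 ≤ M := le_trans (by simp [hw0]) (hM 0 ⟨le_rfl, hδ⟩)
  intro t ht
  have h1 : u₀ t ≤ |u₀ 0| + 2 * σ * M :=
    key_bound δ σ hδ hσ u₀ u₁ w hu₀ hu₁ hu₁pos hw heq M hM hM0 t ht
  have h2 : -u₀ t ≤ |u₀ 0| + 2 * σ * M := by
    have heq' : ∀ t ∈ Set.Icc (0:ℝ) δ,
        (-u₀) t = (-u₀) 0 - (∫ s in (0:ℝ)..t, (-u₀) s * u₁ s) + σ * (-w) t := by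
      intro t ht
      have := heq t ht
      simp only [Pi.neg_apply]
      have hi : (∫ s in (0:ℝ)..t, -u₀ s * u₁ s) = -(∫ s in (0:ℝ)..t, u₀ s * u₁ s) := by
        simp only [neg_mul]
        exact intervalIntegral.integral_neg
      rw [hi]; linarith
    have := key_bound δ σ hδ hσ (-u₀) u₁ (-w) (hu₀.neg) hu₁ hu₁pos (hw.neg) heq' M
      (fun s hs => by simpa using hM s hs) hM0 t ht
    simpa [abs_neg] using this
  rw [abs_le]; constructor <;> linarith
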